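/- Let N be a positive integer, let A be a real symmetric positive-definite N×N matrix with smallest eigenvalue γ > 0, let ε ∈ (0,1), and let ε_th satisfy 0 < ε_th ≤ ε · γ · N^{−3/2}. If A' is a real symmetric N×N matrix with |A_{ij} − A'_{ij}| ≤ ε_th for all indices i, j, then A' is positive definite. -/

import Mathlib

open Matrix in
lemma quad_lower_bound {N : ℕ} (A : Matrix (Fin N) (Fin N) ℝ)
    (hA : A.IsHermitian) (γ : ℝ)
    (hγ : ∀ i, γ ≤ hA.eigenvalues i) (x : Fin N → ℝ) :
    γ * (x ⬝ᵥ x) ≤ x ⬝ᵥ A *ᵥ x := by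
  classical
  obtain ⟨U, d, hUU, hspec, hdγ⟩ : ∃ (U : Matrix (Fin N) (Fin N) ℝ) (d : Fin N → ℝ),
      U * Uᵀ = 1 ∧ A = U * diagonal d * Uᵀ ∧ ∀ i, γ ≤ d i := by
    refine ⟨hA.eigenvectorUnitary, hA.eigenvalues, ?_, ?_, hγ⟩
    · have h := (Matrix.mem_unitaryGroup_iff).mp hA.eigenvectorUnitary.2
      have hstar : star (hA.eigenvectorUnitary : Matrix (Fin N) (Fin N) ℝ)
          = (hA.eigenvectorUnitary : Matrix (Fin N) (Fin N) ℝ)ᵀ := by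
        ext i j; simp [Matrix.conjTranspose_apply]
      rwa [hstar] at h
    · have h := hA.spectral_theorem
      have hstar : star (hA.eigenvectorUnitary : Matrix (Fin N) (Fin N) ℝ)
          = (hA.eigenvectorUnitary : Matrix (Fin N) (Fin N) ℝ)ᵀ := by
        ext i j; simp [Matrix.conjTranspose_apply]
      rw [Unitary.conjStarAlgAut_apply, hstar] at h
      simpa using h
  set y : Fin N → ℝ := Uᵀ *ᵥ x with hy
  have hvm : x ᵥ* U = y := by rw [hy, Matrix.mulVec_transpose]
  clear_value y
  have hxAx : x ⬝ᵥ A *ᵥ x = ∑ i, d i * y i ^ 2 := by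
    rw [hspec, ← mulVec_mulVec, ← mulVec_mulVec, dotProduct_mulVec x U, hvm, ← hy]
    simp only [dotProduct, mulVec_diagonal]
    exact Finset.sum_congr rfl fun i _ => by ring
  have hyU : y ᵥ* Uᵀ = x := by
    rw [Matrix.vecMul_transpose, hy, Matrix.mulVec_mulVec, hUU, Matrix.one_mulVec]
  have hxx : x ⬝ᵥ x = ∑ i, y i ^ 2 := by
    have h2 : y ⬝ᵥ y = x ⬝ᵥ x := by
      calc y ⬝ᵥ y = y ⬝ᵥ (Uᵀ *ᵥ x) := by rw [← hy]
        _ = (y ᵥ* Uᵀ) ⬝ᵥ x := dotProduct_mulVec _ _ _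
        _ = x ⬝ᵥ x := by rw [hyU]
    rw [← h2]; simp [dotProduct, sq]
  rw [hxAx, hxx, Finset.mul_sum]
  exact Finset.sum_le_sum fun i _ => mul_le_mul_of_nonneg_right (hdγ i) (sq_nonneg _)


open Matrix



/-- An entrywise ε_th-perturbation of a symmetric positive-definite matrix with
smallest eigenvalue γ remains positive definite when ε_th ≤ ε·γ·N^{−3/2}. -/
theorem perturbed_matrix_posDef
    (N : ℕ) (hN : 0 < N) (A A' : Matrix (Fin N) (Fin N) ℝ)
    (hA : A.IsHermitian) (hPD : A.PosDef) (γ : ℝ) (hγpos : 0 < γ)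
    (hγ : IsLeast (Set.range hA.eigenvalues) γ)
    (ε εth : ℝ) (hε : ε ∈ Set.Ioo (0:ℝ) 1)
    (hth0 : 0 < εth) (hth : εth ≤ ε * γ * (N:ℝ) ^ (-(3:ℝ)/2))
    (hA' : A'.IsSymm) (hdiff : ∀ i j, |A i j - A' i j| ≤ εth) :
    A'.PosDef := by
  classical
  have hNR : (1:ℝ) ≤ (N:ℝ) := by exact_mod_cast hN
  -- εth * N < γ
  have hkey : εth * N < γ := by
    have h1 : (N:ℝ) ^ (-(3:ℝ)/2) ≤ (N:ℝ) ^ (-1:ℝ) :=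
      Real.rpow_le_rpow_of_exponent_le hNR (by norm_num)
    have h2 : εth < γ * (N:ℝ) ^ (-(3:ℝ)/2) := by
      have hrp : 0 < (N:ℝ) ^ (-(3:ℝ)/2) :=
        Real.rpow_pos_of_pos (by positivity) _
      calc εth ≤ ε * γ * (N:ℝ) ^ (-(3:ℝ)/2) := hth
        _ < 1 * γ * (N:ℝ) ^ (-(3:ℝ)/2) := by
            apply mul_lt_mul_of_pos_right (mul_lt_mul_of_pos_right hε.2 hγpos) hrp
        _ = γ * (N:ℝ) ^ (-(3:ℝ)/2) := by ring
    have h3 : εth < γ * (N:ℝ)⁻¹ := by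
      calc εth < γ * (N:ℝ) ^ (-(3:ℝ)/2) := h2
        _ ≤ γ * (N:ℝ) ^ (-1:ℝ) := by
            exact mul_le_mul_of_nonneg_left h1 hγpos.le
        _ = γ * (N:ℝ)⁻¹ := by rw [Real.rpow_neg_one]
    have hNpos : (0:ℝ) < N := by positivity
    calc εth * N < γ * (N:ℝ)⁻¹ * N := mul_lt_mul_of_pos_right h3 hNpos
      _ = γ := by field_simp
  have heig : ∀ i, γ ≤ hA.eigenvalues i := fun i => hγ.2 ⟨i, rfl⟩
  rw [Matrix.posDef_iff_dotProduct_mulVec]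
  constructor
  · show A'ᴴ = A'
    have : A'ᴴ = A'ᵀ := by ext i j; simp [Matrix.conjTranspose_apply]
    rw [this]; exact hA'
  · intro x hx
    have hstarx : star x = x := by ext i; simp
    rw [hstarx]
    -- positivity of sum of squares
    have hS : 0 < x ⬝ᵥ x := by
      obtain ⟨i, hi⟩ := Function.ne_iff.mp hx
      simp only [Pi.zero_apply] at hi
      exact Finset.sum_pos' (fun j _ => mul_self_nonneg _)
        ⟨i, Finset.mem_univ i, mul_self_pos.mpr hi⟩
    -- lower bound from eigenvalues
    have hlow : γ * (x ⬝ᵥ x) ≤ x ⬝ᵥ A *ᵥ x := quad_lower_bound A hA γ heig x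
    -- perturbation bound
    have habs1 : |x ⬝ᵥ (A - A') *ᵥ x| ≤ εth * (∑ i, |x i|) ^ 2 := by
      have hexp : x ⬝ᵥ (A - A') *ᵥ x = ∑ i, ∑ j, x i * ((A i j - A' i j) * x j) := by
        simp [dotProduct, Matrix.mulVec, Matrix.sub_apply, Finset.mul_sum]
      rw [hexp]
      calc |∑ i, ∑ j, x i * ((A i j - A' i j) * x j)|
          ≤ ∑ i, |∑ j, x i * ((A i j - A' i j) * x j)| := Finset.abs_sum_le_sum_abs _ _
        _ ≤ ∑ i, ∑ j, |x i| * (εth * |x j|) := by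
            refine Finset.sum_le_sum fun i _ => (Finset.abs_sum_le_sum_abs _ _).trans
              (Finset.sum_le_sum fun j _ => ?_)
            rw [abs_mul, abs_mul]
            exact mul_le_mul_of_nonneg_left
              (mul_le_mul_of_nonneg_right (hdiff i j) (abs_nonneg _)) (abs_nonneg _)
        _ = εth * (∑ i, |x i|) ^ 2 := by
            rw [sq, Finset.sum_mul_sum, Finset.mul_sum]
            refine Finset.sum_congr rfl fun i _ => ?_
            rw [Finset.mul_sum]
            exact Finset.sum_congr rfl fun j _ => by ring
    have habs2 : (∑ i, |x i|) ^ 2 ≤ N * (x ⬝ᵥ x) := by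
      have h := sq_sum_le_card_mul_sum_sq (s := Finset.univ) (f := fun i => |x i|)
      simpa [dotProduct, sq_abs, Finset.card_univ, sq, mul_comm] using h
    have hpert : |x ⬝ᵥ (A - A') *ᵥ x| ≤ εth * N * (x ⬝ᵥ x) := by
      calc |x ⬝ᵥ (A - A') *ᵥ x| ≤ εth * (∑ i, |x i|) ^ 2 := habs1
        _ ≤ εth * (N * (x ⬝ᵥ x)) := mul_le_mul_of_nonneg_left habs2 hth0.le
        _ = εth * N * (x ⬝ᵥ x) := by ring
    have hsplit : x ⬝ᵥ A' *ᵥ x = x ⬝ᵥ A *ᵥ x - x ⬝ᵥ (A - A') *ᵥ x := by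
      simp [Matrix.sub_mulVec, dotProduct_sub]
    rw [hsplit]
    have h1 : x ⬝ᵥ (A - A') *ᵥ x ≤ εth * N * (x ⬝ᵥ x) := (abs_le.mp hpert).2
    nlinarith [mul_lt_mul_of_pos_right hkey hS]
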